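/- Let σ := !![0, 1; -1, 0], Z := diag(1, −1), and let X, Y be real 2×2 matrices with Y symmetric. For real μ > 1 define the 4×4 complex block matrix H(μ) := fromBlocks (μ·X·Xᵀ + Y + i·σ) (√(μ²−1)·X·Z) (√(μ²−1)·Z·Xᵀ) (μ·I + i·σ). Then H(μ) is positive semidefinite for all μ > 1 if and only if the 2×2 complex matrix Y + i·(σ − X·σ·Xᵀ) is positive semidefinite. In fact, for each fixed μ > 1, H(μ) is positive semidefinite iff Y + i·(σ − X·σ·Xᵀ) is positive semidefinite. -/

import Mathlib

open Matrix Complex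
open scoped ComplexOrder

/-- The one-mode symplectic form in HHW conventions, as a complex matrix. -/
noncomputable def symp : Matrix (Fin 2) (Fin 2) ℂ := !![0, 1; -1, 0]

/-- `Z = diag(1, −1)` as a complex matrix. -/
noncomputable def Zmat : Matrix (Fin 2) (Fin 2) ℂ := !![1, 0; 0, -1]

/-- TMSV physicality matrix `H(μ) = Γ'_{AB}(μ) + i σ_{AB}` for the output of a Gaussian
channel `(X, Y)` on one half of a two-mode squeezed vacuum with parameter `μ`. -/
noncomputable def Hmat (X Y : Matrix (Fin 2) (Fin 2) ℝ) (μ : ℝ) :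
    Matrix (Fin 2 ⊕ Fin 2) (Fin 2 ⊕ Fin 2) ℂ :=
  Matrix.fromBlocks
    ((μ : ℂ) • (X.map Complex.ofReal * (X.map Complex.ofReal)ᵀ)
      + Y.map Complex.ofReal + Complex.I • symp)
    ((Real.sqrt (μ ^ 2 - 1) : ℂ) • (X.map Complex.ofReal * Zmat))
    ((Real.sqrt (μ ^ 2 - 1) : ℂ) • (Zmat * (X.map Complex.ofReal)ᵀ))
    ((μ : ℂ) • (1 : Matrix (Fin 2) (Fin 2) ℂ) + Complex.I • symp)

lemma symp_mul_symp : symp * symp = -1 := by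
  ext i j
  fin_cases i <;> fin_cases j <;>
    simp [Matrix.mul_apply, Fin.sum_univ_two, symp, Matrix.one_apply]

lemma Zmat_mul_Zmat (M : Matrix (Fin 2) (Fin 2) ℂ) : Zmat * (Zmat * M) = M := by
  rw [← Matrix.mul_assoc]
  have : Zmat * Zmat = 1 := by
    ext i j
    fin_cases i <;> fin_cases j <;>
      simp [Matrix.mul_apply, Fin.sum_univ_two, Zmat, Matrix.one_apply]
  rw [this, Matrix.one_mul]

lemma Zmat_symp_Zmat (M : Matrix (Fin 2) (Fin 2) ℂ) :
    Zmat * (symp * (Zmat * M)) = -(symp * M) := by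
  rw [← Matrix.mul_assoc, ← Matrix.mul_assoc]
  have : Zmat * symp * Zmat = -symp := by
    ext i j
    fin_cases i <;> fin_cases j <;>
      simp [Matrix.mul_apply, Fin.sum_univ_two, Zmat, symp]
  rw [this, Matrix.neg_mul]

lemma one_add_I_symp_psd : ((1 : Matrix (Fin 2) (Fin 2) ℂ) + Complex.I • symp).PosSemidef := by
  have h : (1 : Matrix (Fin 2) (Fin 2) ℂ) + Complex.I • symp
      = (!![1, Complex.I] : Matrix (Fin 1) (Fin 2) ℂ)ᴴ * !![1, Complex.I] := by
    ext i j
    fin_cases i <;> fin_cases j <;>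
      simp [Matrix.mul_apply, Fin.sum_univ_one, symp, Matrix.one_apply, Complex.ext_iff]
  rw [h]
  exact Matrix.posSemidef_conjTranspose_mul_self _

lemma Dmat_posDef {μ : ℝ} (hμ : 1 < μ) :
    ((μ : ℂ) • (1 : Matrix (Fin 2) (Fin 2) ℂ) + Complex.I • symp).PosDef := by
  have h : (μ : ℂ) • (1 : Matrix (Fin 2) (Fin 2) ℂ) + Complex.I • symp
      = ((μ - 1 : ℝ) : ℂ) • (1 : Matrix (Fin 2) (Fin 2) ℂ)
        + ((1 : Matrix (Fin 2) (Fin 2) ℂ) + Complex.I • symp) := by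
    push_cast
    ext i j
    simp [Matrix.add_apply, Matrix.smul_apply, Matrix.one_apply]
    split_ifs <;> ring
  rw [h]
  refine Matrix.PosDef.add_posSemidef ?_ one_add_I_symp_psd
  have h2 : ((μ - 1 : ℝ) : ℂ) • (1 : Matrix (Fin 2) (Fin 2) ℂ)
      = Matrix.diagonal (fun _ => ((μ - 1 : ℝ) : ℂ)) := by
    rw [Matrix.smul_one_eq_diagonal]
  rw [h2, Matrix.posDef_diagonal_iff]
  intro i
  rw [Complex.zero_lt_real]
  linarith

lemma Dmat_inv {μ : ℝ} (hμ : 1 < μ) :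
    ((μ : ℂ) • (1 : Matrix (Fin 2) (Fin 2) ℂ) + Complex.I • symp)⁻¹
      = (((μ ^ 2 - 1 : ℝ) : ℂ))⁻¹
        • ((μ : ℂ) • (1 : Matrix (Fin 2) (Fin 2) ℂ) - Complex.I • symp) := by
  have hc2 : (-1 + (μ : ℂ) ^ 2) ≠ 0 := by
    intro h
    have : (μ : ℂ) ^ 2 = 1 := by linear_combination h
    norm_cast at this
    nlinarith
  apply Matrix.inv_eq_right_inv
  ext i j
  fin_cases i <;> fin_cases j <;>
    simp [Matrix.mul_apply, Fin.sum_univ_two, symp, Matrix.one_apply] <;>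
    field_simp <;>
    first
      | (left; ring)
      | (rw [div_eq_one_iff_eq (fun h => hc2 (by linear_combination h))]; rw [Complex.I_sq]; ring)
      | (simp)

lemma schur_eq (X Y : Matrix (Fin 2) (Fin 2) ℝ) {μ : ℝ} (hμ : 1 < μ) :
    ((μ : ℂ) • (X.map Complex.ofReal * (X.map Complex.ofReal)ᵀ)
        + Y.map Complex.ofReal + Complex.I • symp)
      - ((Real.sqrt (μ ^ 2 - 1) : ℂ) • (X.map Complex.ofReal * Zmat))
        * ((μ : ℂ) • (1 : Matrix (Fin 2) (Fin 2) ℂ) + Complex.I • symp)⁻¹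
        * ((Real.sqrt (μ ^ 2 - 1) : ℂ) • (X.map Complex.ofReal * Zmat))ᴴ
    = Y.map Complex.ofReal
      + Complex.I • (symp - X.map Complex.ofReal * symp * (X.map Complex.ofReal)ᵀ) := by
  set X' := X.map Complex.ofReal with hX'
  have hs : ((Real.sqrt (μ ^ 2 - 1) : ℝ) : ℂ) * ((Real.sqrt (μ ^ 2 - 1) : ℝ) : ℂ)
      = ((μ ^ 2 - 1 : ℝ) : ℂ) := by
    rw [← Complex.ofReal_mul, Real.mul_self_sqrt (by nlinarith)]
  have hc : ((μ ^ 2 - 1 : ℝ) : ℂ) ≠ 0 := by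
    norm_cast
    nlinarith
  have hBH : ((Real.sqrt (μ ^ 2 - 1) : ℂ) • (X' * Zmat))ᴴ
      = (Real.sqrt (μ ^ 2 - 1) : ℂ) • (Zmat * X'ᵀ) := by
    rw [Matrix.conjTranspose_smul, Matrix.conjTranspose_mul]
    congr 1
    · simp [Complex.conj_ofReal]
    congr 1
    · ext i j
      fin_cases i <;> fin_cases j <;> simp [Zmat]
    · ext i j
      simp [hX', Matrix.conjTranspose_apply, Complex.conj_ofReal]
  rw [hBH, Dmat_inv hμ]
  simp only [Matrix.smul_mul, Matrix.mul_smul, smul_smul]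
  have hcoef : ((Real.sqrt (μ ^ 2 - 1) : ℂ)) * ((((μ ^ 2 - 1 : ℝ) : ℂ))⁻¹
      * ((Real.sqrt (μ ^ 2 - 1) : ℂ))) = 1 := by
    rw [mul_comm ((((μ ^ 2 - 1 : ℝ) : ℂ))⁻¹), ← mul_assoc, hs]
    exact mul_inv_cancel₀ hc
  rw [hcoef, one_smul]
  have hinner : X' * Zmat * ((μ : ℂ) • (1 : Matrix (Fin 2) (Fin 2) ℂ) - Complex.I • symp)
        * (Zmat * X'ᵀ)
      = (μ : ℂ) • (X' * X'ᵀ) + Complex.I • (X' * symp * X'ᵀ) := by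
    rw [Matrix.mul_sub, Matrix.sub_mul, Matrix.mul_smul, Matrix.smul_mul, Matrix.mul_smul,
      Matrix.smul_mul, Matrix.mul_one]
    simp only [Matrix.mul_assoc, Zmat_mul_Zmat, Zmat_symp_Zmat, Matrix.mul_neg, smul_neg,
      sub_neg_eq_add]
  rw [hinner]
  rw [smul_sub]
  abel

lemma per_mu (X Y : Matrix (Fin 2) (Fin 2) ℝ) {μ : ℝ} (hμ : 1 < μ) :
    (Hmat X Y μ).PosSemidef ↔
      (Y.map Complex.ofReal
        + Complex.I • (symp - X.map Complex.ofReal * symp * (X.map Complex.ofReal)ᵀ)).PosSemidef := by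
  have hD := Dmat_posDef hμ
  have : Invertible ((μ : ℂ) • (1 : Matrix (Fin 2) (Fin 2) ℂ) + Complex.I • symp) :=
    hD.isUnit.invertible
  have hBH : ((Real.sqrt (μ ^ 2 - 1) : ℂ) • (X.map Complex.ofReal * Zmat))ᴴ
      = (Real.sqrt (μ ^ 2 - 1) : ℂ) • (Zmat * (X.map Complex.ofReal)ᵀ) := by
    rw [Matrix.conjTranspose_smul, Matrix.conjTranspose_mul]
    congr 1
    · simp [Complex.conj_ofReal]
    congr 1
    · ext i j
      fin_cases i <;> fin_cases j <;> simp [Zmat]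
    · ext i j
      simp [Matrix.conjTranspose_apply, Complex.conj_ofReal]
  have hH : Hmat X Y μ = Matrix.fromBlocks
      ((μ : ℂ) • (X.map Complex.ofReal * (X.map Complex.ofReal)ᵀ)
        + Y.map Complex.ofReal + Complex.I • symp)
      ((Real.sqrt (μ ^ 2 - 1) : ℂ) • (X.map Complex.ofReal * Zmat))
      ((Real.sqrt (μ ^ 2 - 1) : ℂ) • (X.map Complex.ofReal * Zmat))ᴴ
      ((μ : ℂ) • (1 : Matrix (Fin 2) (Fin 2) ℂ) + Complex.I • symp) := by
    rw [hBH]; rfl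
  rw [hH, Matrix.PosDef.fromBlocks₂₂ _ _ hD, schur_eq X Y hμ]

theorem tmsv_cp_equivalence (X Y : Matrix (Fin 2) (Fin 2) ℝ) (hY : Yᵀ = Y) :
    ((∀ μ : ℝ, 1 < μ → (Hmat X Y μ).PosSemidef) ↔
      (Y.map Complex.ofReal
        + Complex.I • (symp - X.map Complex.ofReal * symp * (X.map Complex.ofReal)ᵀ)).PosSemidef) ∧
    (∀ μ : ℝ, 1 < μ → ((Hmat X Y μ).PosSemidef ↔
      (Y.map Complex.ofReal
        + Complex.I • (symp - X.map Complex.ofReal * symp * (X.map Complex.ofReal)ᵀ)).PosSemidef)) := by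
  refine ⟨⟨fun h => (per_mu X Y (by norm_num : (1:ℝ) < 2)).1 (h 2 (by norm_num)),
    fun h μ hμ => (per_mu X Y hμ).2 h⟩, fun μ hμ => per_mu X Y hμ⟩
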